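/- arXiv:2512.00904 — 2 statements merged into one kernel-verified Lean document; each statement's English description precedes it below -/
import Mathlib

section
/- (Sinkhorn scaling, as used for the transport plan t_{i,j} = a_i b_j exp(−c_{i,j}/ε)) Let K ∈ ℝ^{N×M} be a matrix with strictly positive entries, and let p ∈ ℝ^{N} and q ∈ ℝ^{M} be strictly positive vectors with ∑_{i=1}^{N} p_i = ∑_{j=1}^{M} q_j. Then there exist strictly positive vectors a ∈ ℝ^{N} and b ∈ ℝ^{M} such that the matrix T with entries t_{i,j} = a_i b_j k_{i,j} satisfies the prescribed marginals ∑_{j=1}^{M} t_{i,j} = p_i for every i and ∑_{i=1}^{N} t_{i,j} = q_j for every j. In particular, taking k_{i,j} = exp(−c_{i,j}/ε), p_i = 1/N and q_j = 1/M yields a plan of the form t_{i,j} = a_i b_j exp(−c_{i,j}/ε) lying in the transportation polytope Π(N,M). -/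
/-- The transportation polytope `Π(N,M)`: matrices in `ℝ^{N×M}` with nonnegative entries,
every row summing to `1/N` and every column summing to `1/M`. -/
def transportPolytope (N M : ℕ) : Set (Fin N → Fin M → ℝ) :=
  {T | (∀ i j, 0 ≤ T i j) ∧ (∀ i : Fin N, ∑ j : Fin M, T i j = 1 / N) ∧
       (∀ j : Fin M, ∑ i : Fin N, T i j = 1 / M)}

noncomputable def sinkF {N M : ℕ} (K : Fin N → Fin M → ℝ) (p : Fin N → ℝ) (q : Fin M → ℝ)
    (x : (Fin N → ℝ) × (Fin M → ℝ)) : ℝ :=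
  (∑ i, ∑ j, K i j * Real.exp (x.1 i + x.2 j)) - (∑ i, p i * x.1 i) - ∑ j, q j * x.2 j

lemma tangent_bound {k w x : ℝ} (hk : 0 < k) (hw : 0 < w) :
    w * x + (w - w * Real.log (w / k)) ≤ k * Real.exp x := by
  have h1 : w * Real.exp (x - Real.log (w / k)) = k * Real.exp x := by
    rw [Real.exp_sub, Real.exp_log (by positivity)]
    field_simp
  have h2 := Real.add_one_le_exp (x - Real.log (w / k))
  have h3 := mul_le_mul_of_nonneg_left h2 hw.le
  linarith [h3, h1]

lemma sum_pair {M : ℕ} (c : Fin M → ℝ) {b b' : Fin M} (hne : b ≠ b') (r r' : ℝ) :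
    ∑ j, c j * (if j = b then r else if j = b' then r' else 0) = c b * r + c b' * r' := by
  classical
  have h : ∀ j, c j * (if j = b then r else if j = b' then r' else 0)
      = (if j = b then c b * r else 0) + (if j = b' then c b' * r' else 0) := by
    intro j
    by_cases h1 : j = b
    · subst h1; simp [hne]
    · by_cases h2 : j = b'
      · subst h2; simp [h1]
      · simp [h1, h2]
  rw [Finset.sum_congr rfl fun j _ => h j, Finset.sum_add_distrib]
  simp

lemma sinkF_deriv {N M : ℕ} (K : Fin N → Fin M → ℝ) (p : Fin N → ℝ) (q : Fin M → ℝ)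
    (u : Fin N → ℝ) (e : Fin N → ℝ) (v : Fin M → ℝ) (d : Fin M → ℝ) :
    HasDerivAt (fun t : ℝ => sinkF K p q (u + t • e, v + t • d))
      ((∑ i, ∑ j, K i j * Real.exp (u i + v j) * (e i + d j)) -
        (∑ i, p i * e i) - ∑ j, q j * d j) 0 := by
  have hterm : ∀ (i : Fin N) (j : Fin M),
      HasDerivAt (fun t : ℝ => K i j * Real.exp (u i + t * e i + (v j + t * d j)))
        (K i j * Real.exp (u i + v j) * (e i + d j)) 0 := by
    intro i j
    have h1 : HasDerivAt (fun t : ℝ => u i + t * e i + (v j + t * d j)) (e i + d j) 0 :=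
      ((hasDerivAt_mul_const (e i)).const_add (u i)).add
        ((hasDerivAt_mul_const (d j)).const_add (v j))
    have h2 := (h1.exp).const_mul (K i j)
    simpa [mul_assoc] using h2
  have hsum : HasDerivAt
      (fun t : ℝ => ∑ i, ∑ j, K i j * Real.exp (u i + t * e i + (v j + t * d j)))
      (∑ i, ∑ j, K i j * Real.exp (u i + v j) * (e i + d j)) 0 :=
    HasDerivAt.fun_sum fun i _ => HasDerivAt.fun_sum fun j _ => hterm i j
  have hlin1 : HasDerivAt (fun t : ℝ => ∑ i, p i * (u i + t * e i)) (∑ i, p i * e i) 0 :=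
    HasDerivAt.fun_sum fun i _ =>
      ((hasDerivAt_mul_const (e i)).const_add (u i)).const_mul (p i)
  have hlin2 : HasDerivAt (fun t : ℝ => ∑ j, q j * (v j + t * d j)) (∑ j, q j * d j) 0 :=
    HasDerivAt.fun_sum fun j _ =>
      ((hasDerivAt_mul_const (d j)).const_add (v j)).const_mul (q j)
  have hfin := (hsum.sub hlin1).sub hlin2
  simp only [sinkF, Pi.add_apply, Pi.smul_apply, smul_eq_mul]
  exact hfin

lemma sinkhorn_core {N M : ℕ} (hN : 0 < N) (hM : 0 < M)
    (K : Fin N → Fin M → ℝ) (hK : ∀ i j, 0 < K i j)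
    (p : Fin N → ℝ) (q : Fin M → ℝ) (hp : ∀ i, 0 < p i) (hq : ∀ j, 0 < q j)
    (hpq : ∑ i, p i = ∑ j, q j) :
    ∃ (a : Fin N → ℝ) (b : Fin M → ℝ), (∀ i, 0 < a i) ∧ (∀ j, 0 < b j) ∧
      (∀ i, ∑ j, a i * b j * K i j = p i) ∧
      (∀ j, ∑ i, a i * b j * K i j = q j) := by
  classical
  haveI : Nonempty (Fin N) := ⟨⟨0, hN⟩⟩
  haveI : Nonempty (Fin M) := ⟨⟨0, hM⟩⟩
  set a0 : Fin N := ⟨0, hN⟩ with ha0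
  set b0 : Fin M := ⟨0, hM⟩ with hb0
  set P := ∑ i, p i with hP
  have hPpos : 0 < P := by
    rw [hP]; exact Finset.sum_pos (fun i _ => hp i) Finset.univ_nonempty
  have hQ : ∑ j, q j = P := hpq.symm
  -- weighted sum identity
  have hsum_w : ∀ (u : Fin N → ℝ) (v : Fin M → ℝ),
      ∑ i, ∑ j, p i * q j / P * (u i + v j) = (∑ i, p i * u i) + ∑ j, q j * v j := by
    intro u v
    have h1 : ∀ i, ∑ j, p i * q j / P * (u i + v j)
        = p i * u i + ∑ j, q j * v j * (p i / P) := by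
      intro i
      have hj : ∀ j, p i * q j / P * (u i + v j)
          = (p i * u i / P) * q j + q j * v j * (p i / P) := fun j => by ring
      rw [Finset.sum_congr rfl fun j _ => hj j, Finset.sum_add_distrib, ← Finset.mul_sum,
        hQ, div_mul_cancel₀ _ hPpos.ne']
    rw [Finset.sum_congr rfl fun i _ => h1 i, Finset.sum_add_distrib]
    congr 1
    rw [Finset.sum_comm]
    refine Finset.sum_congr rfl fun j _ => ?_
    have : ∀ i, q j * v j * (p i / P) = q j * v j * p i / P := fun i => by ring
    rw [Finset.sum_congr rfl fun i _ => this i, ← Finset.sum_div, ← Finset.mul_sum, ← hP]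
    field_simp
  -- f as sum over products
  have hfx : ∀ x : (Fin N → ℝ) × (Fin M → ℝ), sinkF K p q x
      = ∑ ij : Fin N × Fin M, (K ij.1 ij.2 * Real.exp (x.1 ij.1 + x.2 ij.2)
          - p ij.1 * q ij.2 / P * (x.1 ij.1 + x.2 ij.2)) := by
    intro x
    simp only [Fintype.sum_prod_type, Finset.sum_sub_distrib]
    rw [hsum_w x.1 x.2]
    simp only [sinkF]
    ring
  set S := sinkF K p q (0, 0) with hS
  set Ssub : Set ((Fin N → ℝ) × (Fin M → ℝ)) :=
    {x | ∑ j, q j * x.2 j = 0} ∩ {x | sinkF K p q x ≤ S} with hSsub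
  have h00 : ((0, 0) : (Fin N → ℝ) × (Fin M → ℝ)) ∈ Ssub := by
    constructor
    · show ∑ j, q j * (0 : Fin M → ℝ) j = 0
      simp
    · show sinkF K p q (0, 0) ≤ S
      exact le_of_eq hS.symm
  set D := ∑ ij : Fin N × Fin M, (p ij.1 * q ij.2 / P
      - p ij.1 * q ij.2 / P * Real.log (2 * (p ij.1 * q ij.2 / P) / K ij.1 ij.2)) with hD
  have hkey : ∀ x ∈ Ssub, ∀ (a : Fin N) (b : Fin M),
      K a b / 2 * Real.exp (x.1 a + x.2 b) + D ≤ S := by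
    rintro x ⟨hx1, hx2⟩ a b
    have hterm : ∀ ij : Fin N × Fin M,
        (if ij = (a, b) then K a b / 2 * Real.exp (x.1 a + x.2 b) else 0)
          + (p ij.1 * q ij.2 / P
            - p ij.1 * q ij.2 / P * Real.log (2 * (p ij.1 * q ij.2 / P) / K ij.1 ij.2))
        ≤ K ij.1 ij.2 * Real.exp (x.1 ij.1 + x.2 ij.2)
          - p ij.1 * q ij.2 / P * (x.1 ij.1 + x.2 ij.2) := by
      rintro ⟨i1, j1⟩
      have hw : (0:ℝ) < p i1 * q j1 / P := by
        have := hp i1; have := hq j1; positivity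
      have ht := tangent_bound (k := K i1 j1 / 2) (w := p i1 * q j1 / P)
        (x := x.1 i1 + x.2 j1) (by have := hK i1 j1; positivity) hw
      rw [div_div_eq_mul_div, mul_comm (p i1 * q j1 / P) 2] at ht
      have hepos : (0:ℝ) < Real.exp (x.1 i1 + x.2 j1) := Real.exp_pos _
      have hKpos := hK i1 j1
      split_ifs with hif
      · rw [Prod.mk.injEq] at hif
        obtain ⟨rfl, rfl⟩ := hif
        simp only
        nlinarith [ht]
      · simp only
        nlinarith [ht, mul_pos (by positivity : (0:ℝ) < K i1 j1 / 2) hepos]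
    have hsum := Finset.sum_le_sum fun ij (_ : ij ∈ Finset.univ) => hterm ij
    rw [Finset.sum_add_distrib, Finset.sum_ite_eq' Finset.univ ((a, b) : Fin N × Fin M)
      (fun _ => K a b / 2 * Real.exp (x.1 a + x.2 b))] at hsum
    simp only [Finset.mem_univ, if_true] at hsum
    rw [← hfx x, ← hD] at hsum
    exact le_trans hsum hx2
  have hSD : 0 < S - D := by
    have h1 := hkey (0, 0) h00 a0 b0
    have h2 : (0:ℝ) < K a0 b0 / 2 * Real.exp ((0 : Fin N → ℝ) a0 + (0 : Fin M → ℝ) b0) := by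
      have := hK a0 b0; positivity
    linarith
  set kmin := Finset.univ.inf' Finset.univ_nonempty (fun ij : Fin N × Fin M => K ij.1 ij.2)
    with hkmin_def
  have hkmin : 0 < kmin := by
    rw [hkmin_def]
    exact (Finset.lt_inf'_iff _).mpr fun ij _ => hK ij.1 ij.2
  have hkmin_le : ∀ a b, kmin ≤ K a b := fun a b =>
    Finset.inf'_le _ (Finset.mem_univ ((a, b) : Fin N × Fin M))
  set B := Real.log (2 * (S - D) / kmin) with hBdef
  have hB : ∀ x ∈ Ssub, ∀ (a : Fin N) (b : Fin M), x.1 a + x.2 b ≤ B := by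
    intro x hx a b
    have h1 := hkey x hx a b
    have hepos : (0:ℝ) < Real.exp (x.1 a + x.2 b) := Real.exp_pos _
    have h2 : kmin / 2 * Real.exp (x.1 a + x.2 b) ≤ S - D := by
      nlinarith [hkmin_le a b]
    rw [hBdef, Real.le_log_iff_exp_le (by positivity)]
    rw [le_div_iff₀ hkmin]
    nlinarith
  -- coordinate bounds
  have hcoordU_hi : ∀ x ∈ Ssub, ∀ a, x.1 a ≤ B := by
    intro x hx a
    have h3 : ∑ j, q j * (x.1 a + x.2 j) ≤ ∑ j, q j * B :=
      Finset.sum_le_sum fun j _ => mul_le_mul_of_nonneg_left (hB x hx a j) (hq j).le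
    have h4 : ∑ j, q j * (x.1 a + x.2 j) = P * x.1 a + ∑ j, q j * x.2 j := by
      simp only [mul_add]
      rw [Finset.sum_add_distrib, ← Finset.sum_mul, hQ]
    have h5 : (∑ j, q j * B) = P * B := by rw [← Finset.sum_mul, hQ]
    rw [h4, hx.1, add_zero, h5] at h3
    exact le_of_mul_le_mul_left h3 hPpos
  have hLinLow : ∀ x ∈ Ssub, -S ≤ ∑ i, p i * x.1 i := by
    intro x hx
    have hE : 0 ≤ ∑ i, ∑ j, K i j * Real.exp (x.1 i + x.2 j) :=
      Finset.sum_nonneg fun i _ => Finset.sum_nonneg fun j _ =>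
        (mul_pos (hK i j) (Real.exp_pos _)).le
    have h2 := hx.2
    simp only [Set.mem_setOf_eq, sinkF] at h2
    have hx1 := hx.1
    simp only [Set.mem_setOf_eq] at hx1
    linarith
  have hcoordV_hi : ∀ x ∈ Ssub, ∀ b, x.2 b ≤ B + S / P := by
    intro x hx b
    have h3 : ∑ i, p i * (x.1 i + x.2 b) ≤ ∑ i, p i * B :=
      Finset.sum_le_sum fun i _ => mul_le_mul_of_nonneg_left (hB x hx i b) (hp i).le
    have h4 : ∑ i, p i * (x.1 i + x.2 b) = (∑ i, p i * x.1 i) + P * x.2 b := by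
      simp only [mul_add]
      rw [Finset.sum_add_distrib, ← Finset.sum_mul, ← hP]
    have h5 : (∑ i, p i * B) = P * B := by rw [← Finset.sum_mul, ← hP]
    have h6 := hLinLow x hx
    rw [h4, h5] at h3
    have h7 : P * x.2 b ≤ P * (B + S / P) := by
      have h8 : P * (B + S / P) = P * B + S := by field_simp
      linarith
    exact le_of_mul_le_mul_left h7 hPpos
  have hcoordU_lo : ∀ x ∈ Ssub, ∀ a, (-S - P * max B 0) / p a ≤ x.1 a := by
    intro x hx a
    have hsplit : ∑ i, p i * x.1 i
        = p a * x.1 a + ∑ i ∈ Finset.univ.erase a, p i * x.1 i :=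
      (Finset.add_sum_erase _ _ (Finset.mem_univ a)).symm
    have h1 : ∑ i ∈ Finset.univ.erase a, p i * x.1 i
        ≤ ∑ i ∈ Finset.univ.erase a, p i * max B 0 :=
      Finset.sum_le_sum fun i _ =>
        mul_le_mul_of_nonneg_left ((hcoordU_hi x hx i).trans (le_max_left _ _)) (hp i).le
    have h2 : ∑ i ∈ Finset.univ.erase a, p i * max B 0 ≤ ∑ i, p i * max B 0 :=
      Finset.sum_le_sum_of_subset_of_nonneg (Finset.erase_subset _ _)
        fun i _ _ => mul_nonneg (hp i).le (le_max_right _ _)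
    have h3 : (∑ i, p i * max B 0) = P * max B 0 := by rw [← Finset.sum_mul, ← hP]
    have h4 := hLinLow x hx
    rw [div_le_iff₀ (hp a)]
    nlinarith
  have hcoordV_lo : ∀ x ∈ Ssub, ∀ b, -(P * max (B + S / P) 0) / q b ≤ x.2 b := by
    intro x hx b
    have hx1 := hx.1
    simp only [Set.mem_setOf_eq] at hx1
    have hsplit : (0:ℝ) = q b * x.2 b + ∑ j ∈ Finset.univ.erase b, q j * x.2 j := by
      rw [Finset.add_sum_erase Finset.univ (fun j => q j * x.2 j) (Finset.mem_univ b)]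
      exact hx1.symm
    have h1 : ∑ j ∈ Finset.univ.erase b, q j * x.2 j
        ≤ ∑ j ∈ Finset.univ.erase b, q j * max (B + S / P) 0 :=
      Finset.sum_le_sum fun j _ =>
        mul_le_mul_of_nonneg_left ((hcoordV_hi x hx j).trans (le_max_left _ _)) (hq j).le
    have h2 : ∑ j ∈ Finset.univ.erase b, q j * max (B + S / P) 0
        ≤ ∑ j, q j * max (B + S / P) 0 :=
      Finset.sum_le_sum_of_subset_of_nonneg (Finset.erase_subset _ _)
        fun j _ _ => mul_nonneg (hq j).le (le_max_right _ _)
    have h3 : (∑ j, q j * max (B + S / P) 0) = P * max (B + S / P) 0 := by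
      rw [← Finset.sum_mul, hQ]
    rw [div_le_iff₀ (hq b)]
    nlinarith
  -- continuity
  have hfc : Continuous (sinkF K p q) := by
    unfold sinkF
    apply Continuous.sub
    apply Continuous.sub
    · exact continuous_finset_sum _ fun i _ => continuous_finset_sum _ fun j _ =>
        continuous_const.mul (((continuous_apply i).comp continuous_fst).add
          ((continuous_apply j).comp continuous_snd)).rexp
    · exact continuous_finset_sum _ fun i _ =>
        continuous_const.mul ((continuous_apply i).comp continuous_fst)
    · exact continuous_finset_sum _ fun j _ =>
        continuous_const.mul ((continuous_apply j).comp continuous_snd)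
  have hclosed : IsClosed Ssub := by
    apply IsClosed.inter
    · exact isClosed_eq (continuous_finset_sum _ fun j _ =>
        continuous_const.mul ((continuous_apply j).comp continuous_snd)) continuous_const
    · exact isClosed_le hfc continuous_const
  have hboxcompact : IsCompact ((Set.univ.pi fun i : Fin N =>
        Set.Icc ((-S - P * max B 0) / p i) B) ×ˢ
      (Set.univ.pi fun j : Fin M => Set.Icc (-(P * max (B + S / P) 0) / q j) (B + S / P))) :=
    (isCompact_univ_pi fun i => isCompact_Icc).prod (isCompact_univ_pi fun j => isCompact_Icc)
  have hsubbox : Ssub ⊆ (Set.univ.pi fun i : Fin N =>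
        Set.Icc ((-S - P * max B 0) / p i) B) ×ˢ
      (Set.univ.pi fun j : Fin M => Set.Icc (-(P * max (B + S / P) 0) / q j) (B + S / P)) := by
    intro x hx
    constructor
    · exact Set.mem_univ_pi.mpr fun i => Set.mem_Icc.mpr ⟨hcoordU_lo x hx i, hcoordU_hi x hx i⟩
    · exact Set.mem_univ_pi.mpr fun j => Set.mem_Icc.mpr ⟨hcoordV_lo x hx j, hcoordV_hi x hx j⟩
  have hcsub : IsCompact Ssub := hboxcompact.of_isClosed_subset hclosed hsubbox
  obtain ⟨x, hxmem, hxmin⟩ := hcsub.exists_isMinOn ⟨(0, 0), h00⟩ hfc.continuousOn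
  have hxc : ∑ j, q j * x.2 j = 0 := hxmem.1
  have hglob : ∀ y : (Fin N → ℝ) × (Fin M → ℝ),
      (∑ j, q j * y.2 j = 0) → sinkF K p q x ≤ sinkF K p q y := by
    intro y hy
    by_cases hc : sinkF K p q y ≤ S
    · exact hxmin ⟨hy, hc⟩
    · exact le_trans hxmem.2 (not_le.mp hc).le
  -- first order condition: rows
  have hrow : ∀ i0 : Fin N, ∑ j, K i0 j * Real.exp (x.1 i0 + x.2 j) = p i0 := by
    intro i0
    set e : Fin N → ℝ := fun i => if i = i0 then 1 else 0 with he
    have hder := sinkF_deriv K p q x.1 e x.2 0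
    have hmin : IsLocalMin (fun t : ℝ => sinkF K p q (x.1 + t • e, x.2 + t • (0 : Fin M → ℝ))) 0 := by
      have h0 : (fun t : ℝ => sinkF K p q (x.1 + t • e, x.2 + t • (0 : Fin M → ℝ))) 0
          = sinkF K p q x := by simp
      refine Filter.Eventually.of_forall fun t => ?_
      rw [h0]
      refine hglob _ ?_
      simpa using hxc
    have hz := hmin.hasDerivAt_eq_zero hder
    have h2 : ∀ i : Fin N, (∑ j, K i j * Real.exp (x.1 i + x.2 j) * (e i + (0 : Fin M → ℝ) j))
        = if i = i0 then ∑ j, K i j * Real.exp (x.1 i + x.2 j) else 0 := by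
      intro i
      simp only [Pi.zero_apply, add_zero, he]
      by_cases h : i = i0
      · simp [h]
      · simp [h]
    rw [Finset.sum_congr rfl fun i _ => h2 i,
      Finset.sum_ite_eq' Finset.univ i0 (fun i => ∑ j, K i j * Real.exp (x.1 i + x.2 j))] at hz
    simp only [Finset.mem_univ, if_true, he, mul_ite, mul_one, mul_zero,
      Finset.sum_ite_eq' Finset.univ i0 p, Pi.zero_apply, Finset.sum_const_zero] at hz
    linarith
  -- first order condition: column pairs
  have hcolpair : ∀ b b' : Fin M,
      q b' * (∑ i, K i b * Real.exp (x.1 i + x.2 b))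
        = q b * ∑ i, K i b' * Real.exp (x.1 i + x.2 b') := by
    intro b b'
    rcases eq_or_ne b b' with rfl | hne
    · rfl
    · set d : Fin M → ℝ := fun j => if j = b then q b' else if j = b' then -q b else 0 with hd
      have hqd : ∑ j, q j * d j = 0 := by
        rw [hd, sum_pair q hne (q b') (-q b)]
        ring
      have hconstraint : ∀ t : ℝ, ∑ j, q j * (x.2 + t • d) j = 0 := by
        intro t
        have hterm : ∀ j, q j * (x.2 + t • d) j = q j * x.2 j + t * (q j * d j) := by
          intro j; simp [Pi.add_apply, Pi.smul_apply, smul_eq_mul]; ring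
        rw [Finset.sum_congr rfl fun j _ => hterm j, Finset.sum_add_distrib,
          ← Finset.mul_sum, hqd, hxc]
        ring
      have hder := sinkF_deriv K p q x.1 0 x.2 d
      have hmin : IsLocalMin (fun t : ℝ => sinkF K p q (x.1 + t • (0 : Fin N → ℝ), x.2 + t • d)) 0 := by
        have h0 : (fun t : ℝ => sinkF K p q (x.1 + t • (0 : Fin N → ℝ), x.2 + t • d)) 0
            = sinkF K p q x := by simp
        refine Filter.Eventually.of_forall fun t => ?_
        rw [h0]
        exact hglob _ (hconstraint t)
      have hz := hmin.hasDerivAt_eq_zero hder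
      have h2 : ∀ i : Fin N, (∑ j, K i j * Real.exp (x.1 i + x.2 j) * ((0 : Fin N → ℝ) i + d j))
          = K i b * Real.exp (x.1 i + x.2 b) * q b' + K i b' * Real.exp (x.1 i + x.2 b') * (-q b) := by
        intro i
        simp only [Pi.zero_apply, zero_add, hd]
        exact sum_pair (fun j => K i j * Real.exp (x.1 i + x.2 j)) hne (q b') (-q b)
      rw [Finset.sum_congr rfl fun i _ => h2 i, Finset.sum_add_distrib,
        ← Finset.sum_mul, ← Finset.sum_mul, hqd] at hz
      simp only [Pi.zero_apply, mul_zero, Finset.sum_const_zero] at hz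
      linear_combination hz
  have hsumcol : ∑ b, ∑ i, K i b * Real.exp (x.1 i + x.2 b) = P := by
    rw [Finset.sum_comm, Finset.sum_congr rfl fun i _ => hrow i]
  have hcb : ∀ b, (∑ i, K i b * Real.exp (x.1 i + x.2 b)) * q b0
      = q b * ∑ i, K i b0 * Real.exp (x.1 i + x.2 b0) := fun b => by
    linear_combination hcolpair b b0
  have hcolb0 : ∑ i, K i b0 * Real.exp (x.1 i + x.2 b0) = q b0 := by
    have h1 : P * q b0 = (∑ b, q b) * (∑ i, K i b0 * Real.exp (x.1 i + x.2 b0)) := by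
      rw [← hsumcol, Finset.sum_mul, Finset.sum_congr rfl fun b _ => hcb b, ← Finset.sum_mul]
    rw [hQ] at h1
    exact (mul_left_cancel₀ hPpos.ne' h1).symm
  have hcol : ∀ b, ∑ i, K i b * Real.exp (x.1 i + x.2 b) = q b := by
    intro b
    have h := hcb b
    rw [hcolb0] at h
    exact mul_right_cancel₀ (hq b0).ne' h
  refine ⟨fun i => Real.exp (x.1 i), fun j => Real.exp (x.2 j),
    fun i => Real.exp_pos _, fun j => Real.exp_pos _, fun i => ?_, fun j => ?_⟩
  · rw [← hrow i]
    exact Finset.sum_congr rfl fun j _ => by rw [Real.exp_add]; ring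
  · rw [← hcol j]
    exact Finset.sum_congr rfl fun i _ => by rw [Real.exp_add]; ring

/-- Sinkhorn scaling: for a strictly positive matrix `K` and strictly positive marginals
`p`, `q` with equal total mass, there exist strictly positive scaling vectors `a`, `b`
such that `t_{i,j} = a_i b_j k_{i,j}` has row marginals `p` and column marginals `q`.
In particular, for `k_{i,j} = exp(-c_{i,j}/ε)`, `p_i = 1/N`, `q_j = 1/M`, there is a plan
of the form `t_{i,j} = a_i b_j exp(-c_{i,j}/ε)` lying in `Π(N,M)`. -/
theorem sinkhorn_scaling (N M : ℕ) (hN : 0 < N) (hM : 0 < M)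
    (K : Fin N → Fin M → ℝ) (hK : ∀ i j, 0 < K i j)
    (p : Fin N → ℝ) (q : Fin M → ℝ) (hp : ∀ i, 0 < p i) (hq : ∀ j, 0 < q j)
    (hpq : ∑ i : Fin N, p i = ∑ j : Fin M, q j)
    (C : Fin N → Fin M → ℝ) (ε : ℝ) (hε : 0 < ε) :
    (∃ (a : Fin N → ℝ) (b : Fin M → ℝ), (∀ i, 0 < a i) ∧ (∀ j, 0 < b j) ∧
      (∀ i : Fin N, ∑ j : Fin M, a i * b j * K i j = p i) ∧
      (∀ j : Fin M, ∑ i : Fin N, a i * b j * K i j = q j)) ∧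
    (∃ (a : Fin N → ℝ) (b : Fin M → ℝ), (∀ i, 0 < a i) ∧ (∀ j, 0 < b j) ∧
      (fun (i : Fin N) (j : Fin M) => a i * b j * Real.exp (-(C i j) / ε)) ∈
        transportPolytope N M) := by
  constructor
  · exact sinkhorn_core hN hM K hK p q hp hq hpq
  · have hN0 : (N:ℝ) ≠ 0 := Nat.cast_ne_zero.mpr hN.ne'
    have hM0 : (M:ℝ) ≠ 0 := Nat.cast_ne_zero.mpr hM.ne'
    obtain ⟨a, b, ha, hb, hr, hc⟩ := sinkhorn_core hN hM
      (fun i j => Real.exp (-(C i j) / ε)) (fun i j => Real.exp_pos _)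
      (fun _ => 1 / (N:ℝ)) (fun _ => 1 / (M:ℝ)) (fun _ => by positivity) (fun _ => by positivity)
      (by simp [Finset.sum_const, Finset.card_univ, mul_one_div, hN0, hM0])
    exact ⟨a, b, ha, hb,
      ⟨fun i j => (mul_pos (mul_pos (ha i) (hb j)) (Real.exp_pos _)).le, hr, hc⟩⟩
end

section
/- Let N and M be positive integers, C ∈ ℝ^{N×M} a cost matrix, and ε > 0. Suppose T* ∈ ℝ^{N×M} has entries t*_{i,j} = a_i b_j exp(−c_{i,j}/ε) for some strictly positive vectors a ∈ ℝ^{N}, b ∈ ℝ^{M}, and suppose T* lies in the transportation polytope Π(N,M). Then T* minimizes the entropic objective F(T) = ⟨T,C⟩ + ε ∑_{i,j} t_{i,j} log t_{i,j} over all entrywise strictly positive matrices T ∈ Π(N,M), i.e., F(T*) ≤ F(T) for every entrywise positive T ∈ Π(N,M). -/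
/-- The entropic objective `F(T) = ⟨T,C⟩ + ε ∑_{i,j} t_{i,j} log t_{i,j}`. -/
noncomputable def entropicObjective (N M : ℕ) (C : Fin N → Fin M → ℝ) (ε : ℝ)
    (T : Fin N → Fin M → ℝ) : ℝ :=
  (∑ i : Fin N, ∑ j : Fin M, T i j * C i j) +
    ε * ∑ i : Fin N, ∑ j : Fin M, T i j * Real.log (T i j)

private lemma gibbs_pointwise (t s : ℝ) (ht : 0 < t) (hs : 0 < s) :
    t - s ≤ t * Real.log t - t * Real.log s := by
  have h := Real.log_le_sub_one_of_pos (div_pos hs ht)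
  rw [Real.log_div hs.ne' ht.ne', div_sub' ht.ne'] at h
  have h2 := (le_div_iff₀ ht).mp h
  nlinarith

/-- If `T*` has entries `t*_{i,j} = a_i b_j exp(-c_{i,j}/ε)` for strictly positive vectors
`a`, `b` and lies in `Π(N,M)`, then `T*` minimizes the entropic objective over all
entrywise strictly positive matrices in `Π(N,M)`. -/
theorem sinkhorn_form_minimizes_entropic (N M : ℕ) (hN : 0 < N) (hM : 0 < M)
    (C : Fin N → Fin M → ℝ) (ε : ℝ) (hε : 0 < ε)
    (a : Fin N → ℝ) (b : Fin M → ℝ) (ha : ∀ i, 0 < a i) (hb : ∀ j, 0 < b j)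
    (Tstar : Fin N → Fin M → ℝ)
    (hT : ∀ i j, Tstar i j = a i * b j * Real.exp (-(C i j) / ε))
    (hmem : Tstar ∈ transportPolytope N M) :
    ∀ T ∈ transportPolytope N M, (∀ i j, 0 < T i j) →
      entropicObjective N M C ε Tstar ≤ entropicObjective N M C ε T := by
  obtain ⟨hTn, hTr, hTc⟩ := hmem
  intro T hTmem hpos
  obtain ⟨hTn', hTr', hTc'⟩ := hTmem
  have hTspos : ∀ i j, 0 < Tstar i j := fun i j => by
    rw [hT]; exact mul_pos (mul_pos (ha i) (hb j)) (Real.exp_pos _)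
  have hC : ∀ i j, C i j
      = ε * (Real.log (a i) + Real.log (b j) - Real.log (Tstar i j)) := by
    intro i j
    rw [hT, Real.log_mul (mul_pos (ha i) (hb j)).ne' (Real.exp_ne_zero _),
        Real.log_mul (ha i).ne' (hb j).ne', Real.log_exp]
    field_simp
    ring
  have key : ∀ S : Fin N → Fin M → ℝ,
      (∀ i : Fin N, ∑ j : Fin M, S i j = 1 / N) →
      (∀ j : Fin M, ∑ i : Fin N, S i j = 1 / M) →
      entropicObjective N M C ε S =
        ε * (∑ i : Fin N, ∑ j : Fin M,
            (S i j * Real.log (S i j) - S i j * Real.log (Tstar i j)))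
          + ε * ((∑ i : Fin N, Real.log (a i)) / N
              + (∑ j : Fin M, Real.log (b j)) / M) := by
    intro S hr hc
    have hA : ∑ i : Fin N, ∑ j : Fin M, S i j * Real.log (a i)
        = (∑ i : Fin N, Real.log (a i)) / N := by
      rw [Finset.sum_div]
      refine Finset.sum_congr rfl fun i _ => ?_
      rw [← Finset.sum_mul, hr i]; ring
    have hB : ∑ i : Fin N, ∑ j : Fin M, S i j * Real.log (b j)
        = (∑ j : Fin M, Real.log (b j)) / M := by
      rw [Finset.sum_comm, Finset.sum_div]
      refine Finset.sum_congr rfl fun j _ => ?_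
      rw [← Finset.sum_mul, hc j]; ring
    have h1 : (∑ i : Fin N, ∑ j : Fin M, S i j * C i j)
        = ε * ((∑ i : Fin N, Real.log (a i)) / N
            + (∑ j : Fin M, Real.log (b j)) / M
            - ∑ i : Fin N, ∑ j : Fin M, S i j * Real.log (Tstar i j)) := by
      have hpt : ∀ i j, S i j * C i j
          = ε * (S i j * Real.log (a i)) + ε * (S i j * Real.log (b j))
            - ε * (S i j * Real.log (Tstar i j)) := fun i j => by
        rw [hC]; ring
      simp_rw [hpt, Finset.sum_sub_distrib, Finset.sum_add_distrib, ← Finset.mul_sum]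
      rw [hA, hB]; ring
    unfold entropicObjective
    rw [h1]
    simp_rw [Finset.sum_sub_distrib]
    ring
  rw [key Tstar hTr hTc, key T hTr' hTc']
  have hz : ∑ i : Fin N, ∑ j : Fin M,
      (Tstar i j * Real.log (Tstar i j) - Tstar i j * Real.log (Tstar i j)) = 0 := by
    simp
  have hD : 0 ≤ ∑ i : Fin N, ∑ j : Fin M,
      (T i j * Real.log (T i j) - T i j * Real.log (Tstar i j)) := by
    have h1 : ∑ i : Fin N, ∑ j : Fin M, (T i j - Tstar i j) = 0 := by
      simp_rw [Finset.sum_sub_distrib]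
      rw [Finset.sum_congr rfl fun i _ => hTr' i,
          Finset.sum_congr rfl fun i _ => hTr i]
      simp
    calc (0:ℝ) = ∑ i : Fin N, ∑ j : Fin M, (T i j - Tstar i j) := h1.symm
      _ ≤ _ := Finset.sum_le_sum fun i _ => Finset.sum_le_sum fun j _ =>
          gibbs_pointwise _ _ (hpos i j) (hTspos i j)
  rw [hz]
  nlinarith [mul_nonneg hε.le hD]
end
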